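/- arXiv:2304.10763 — 4 statements merged into one kernel-verified Lean document; each statement's English description precedes it below -/
import Mathlib

section
/- Let X be a geodesic metric space and Γ a discrete group of isometries of X acting with codiameter at most D₀ (i.e. diam(Γ\X) ≤ D₀). If Γ' is a normal subgroup of Γ of index [Γ : Γ'] ≤ J, then Γ' acts with codiameter at most 2D₀(J+1). -/
/-- A geodesic metric space: any two points are joined by a geodesic segment. -/
def IsGeodesicSpace (X : Type*) [MetricSpace X] : Prop :=
  ∀ x y : X, ∃ c : ℝ → X, c 0 = x ∧ c (dist x y) = y ∧
    ∀ s t : ℝ, s ∈ Set.Icc 0 (dist x y) → t ∈ Set.Icc 0 (dist x y) →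
      dist (c s) (c t) = |s - t|

/-- A set `S` of elements of a group `G` acting on `X` has codiameter at most `D`:
every point of `X` lies within distance (arbitrarily close to) `D` of the `S`-orbit of any
point, i.e. the quotient has diameter at most `D`. -/
def CodiamLE (X : Type*) [MetricSpace X] {G : Type*} [Group G] [MulAction G X]
    (S : Set G) (D : ℝ) : Prop :=
  ∀ x y : X, ∀ ε : ℝ, 0 < ε → ∃ g ∈ S, dist y (g • x) ≤ D + ε

/-- If a discrete group `Γ` of isometries of a geodesic space `X` acts with
codiameter at most `D₀`, and `Γ'` is a normal subgroup of index at most `J`, then `Γ'` acts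
with codiameter at most `2·D₀·(J+1)`. -/
theorem stmt0 {X : Type*} [MetricSpace X] (hgeo : IsGeodesicSpace X)
    {G : Type*} [Group G] [MulAction G X]
    (hiso : ∀ g : G, Isometry (fun x : X => g • x))
    (hdisc : ∀ (x : X) (r : ℝ), {g : G | dist (g • x) x ≤ r}.Finite)
    {D₀ : ℝ} (hD₀ : 0 ≤ D₀)
    (hcodiam : CodiamLE X (Set.univ : Set G) D₀)
    {Γ' : Subgroup G} (hnorm : Γ'.Normal) {J : ℕ}
    (hfin : Γ'.FiniteIndex) (hJ : Γ'.index ≤ J) :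
    CodiamLE X (Γ' : Set G) (2 * D₀ * (J + 1)) := by
  intro x y ε hε
  by_contra hcon
  push_neg at hcon
  -- distances between smul points
  have hdsmul : ∀ (g : G) (u v : X), dist (g • u) (g • v) = dist u v := by
    intro g u v; exact (hiso g).dist_eq u v
  -- the orbit set
  set S : Set X := (fun g : G => g • x) '' (Γ' : Set G) with hSdef
  have hSne : S.Nonempty := ⟨x, 1, Γ'.one_mem, by simp⟩
  set F : X → ℝ := fun u => Metric.infDist u S with hFdef
  have hmemS : ∀ g ∈ Γ', (g • x) ∈ S := fun g hg => ⟨g, hg, rfl⟩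
  have hFx : F x = 0 := Metric.infDist_zero_of_mem ⟨1, Γ'.one_mem, by simp⟩
  -- 1-Lipschitz
  have hlip : ∀ u v : X, |F u - F v| ≤ dist u v := by
    intro u v
    rw [abs_sub_le_iff]
    constructor
    · have := @Metric.infDist_le_infDist_add_dist X _ S u v
      linarith [this, (dist_comm u v ▸ this : Metric.infDist u S ≤ Metric.infDist v S + dist u v)]
    · have := @Metric.infDist_le_infDist_add_dist X _ S v u
      rw [dist_comm v u] at this
      linarith
  -- lower bound on F y
  have hFy : 2 * D₀ * (J + 1) + ε ≤ F y := by
    by_contra h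
    push_neg at h
    obtain ⟨p, ⟨g, hg, rfl⟩, hp⟩ := (Metric.infDist_lt_iff hSne).mp h
    exact absurd (le_of_lt hp) (not_le.mpr (hcon g hg))
  -- invariance of F under Γ'
  have hFinv : ∀ γ ∈ Γ', ∀ u : X, F (γ • u) = F u := by
    have key : ∀ γ ∈ Γ', ∀ u : X, F (γ • u) ≤ F u := by
      intro γ hγ u
      by_contra h
      push_neg at h
      obtain ⟨p, ⟨g, hg, rfl⟩, hp⟩ := (Metric.infDist_lt_iff hSne).mp h
      have h1 : F (γ • u) ≤ dist (γ • u) ((γ * g) • x) :=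
        Metric.infDist_le_dist_of_mem (hmemS _ (Γ'.mul_mem hγ hg))
      rw [mul_smul, hdsmul] at h1
      linarith
    intro γ hγ u
    refine le_antisymm (key γ hγ u) ?_
    have := key γ⁻¹ (Γ'.inv_mem hγ) (γ • u)
    rwa [inv_smul_smul] at this
  -- F is constant on cosets
  have hcoset : ∀ g h : G, (QuotientGroup.mk g : G ⧸ Γ') = QuotientGroup.mk h →
      F (g • x) = F (h • x) := by
    intro g h hq
    have hmem : g⁻¹ * h ∈ Γ' := QuotientGroup.eq.mp hq
    have hmem2 : g * (g⁻¹ * h) * g⁻¹ ∈ Γ' := hnorm.conj_mem _ hmem g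
    have hh : h • x = (g * (g⁻¹ * h) * g⁻¹) • (g • x) := by
      rw [← mul_smul]; congr 1; group
    rw [hh, hFinv _ hmem2]
  -- geodesic from x to y
  obtain ⟨c, hc0, hcd, hcdist⟩ := hgeo x y
  set d : ℝ := dist x y with hd
  have hd0 : (0:ℝ) ≤ d := dist_nonneg
  set f : ℝ → ℝ := fun t => F (c t) with hfdef
  have hcont : ContinuousOn f (Set.Icc 0 d) := by
    refine (LipschitzOnWith.of_dist_le_mul (K := 1) ?_).continuousOn
    intro s hs t ht
    have h1 := hlip (c s) (c t)
    rw [hcdist s t hs ht] at h1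
    simpa [Real.dist_eq] using h1
  have hf0 : f 0 = 0 := by rw [hfdef]; simp only; rw [hc0, hFx]
  have hfd : f d = F y := by rw [hfdef]; simp only; rw [hcd]
  set ε' : ℝ := ε / (8 * (J + 1)) with hε'
  have hJ1 : (0:ℝ) < J + 1 := by positivity
  have hε'pos : 0 < ε' := by positivity
  set a : ℝ := ε / (2 * ((J:ℝ) + 1)) with ha
  have hapos : 0 < a := by positivity
  have haJ : ((J:ℝ) + 1) * a = ε / 2 := by rw [ha]; field_simp
  have hε'a : 2 * ε' < a := by
    have h1 : 2 * ε' = ε / (4 * ((J:ℝ) + 1)) := by rw [hε']; field_simp; ring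
    rw [h1, ha]
    exact div_lt_div_of_pos_left hε (by positivity) (by nlinarith)
  set v : ℕ → ℝ := fun k => (2 * k + 1) * D₀ + (k + 1) * a with hv
  -- main existence
  have hmain : ∀ k : Fin (J + 1), ∃ g : G, |F (g • x) - v k| ≤ D₀ + ε' := by
    intro k
    have hk : (k : ℝ) ≤ J := by
      have := k.isLt
      exact_mod_cast Nat.lt_succ_iff.mp this
    have hk0 : (0:ℝ) ≤ (k:ℕ) := by positivity
    have hv0 : 0 ≤ v k := by
      simp only [hv]
      have : (0:ℝ) ≤ (2 * (k:ℕ) + 1) * D₀ := by positivity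
      have : (0:ℝ) ≤ ((k:ℕ) + 1) * ε / (2 * (J + 1)) := by positivity
      simp only [hv] at *
      positivity
    have hvy : v k ≤ F y := by
      have h1 : v k ≤ (2 * (J:ℝ) + 1) * D₀ + ((J:ℝ) + 1) * a := by
        simp only [hv]
        have h2 : ((k:ℕ):ℝ) ≤ (J:ℝ) := hk
        nlinarith
      rw [haJ] at h1
      have h3 : (2 * (J:ℝ) + 1) * D₀ + ε / 2 ≤ 2 * D₀ * ((J:ℝ) + 1) + ε := by nlinarith
      exact le_trans h1 (le_trans h3 hFy)
    have hmem : v k ∈ Set.Icc (f 0) (f d) := by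
      rw [hf0, hfd]; exact ⟨hv0, hvy⟩
    obtain ⟨t, ht, hft⟩ := intermediate_value_Icc hd0 hcont hmem
    obtain ⟨g, -, hg⟩ := hcodiam x (c t) ε' hε'pos
    refine ⟨g, ?_⟩
    have h1 := hlip (g • x) (c t)
    rw [dist_comm] at h1
    have : F (c t) = v k := hft
    calc |F (g • x) - v k| = |F (g • x) - F (c t)| := by rw [this]
      _ ≤ dist (c t) (g • x) := h1
      _ ≤ D₀ + ε' := hg
  choose g hg using hmain
  -- the map to cosets is injective
  have hinj : Function.Injective (fun k : Fin (J + 1) => (QuotientGroup.mk (g k) : G ⧸ Γ')) := by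
    intro i j hij
    by_contra hne
    -- wlog i < j
    have key : ∀ i j : Fin (J + 1), (i:ℕ) < (j:ℕ) →
        (QuotientGroup.mk (g i) : G ⧸ Γ') = QuotientGroup.mk (g j) → False := by
      intro i j hlt hq
      have hFeq : F (g i • x) = F (g j • x) := hcoset _ _ hq
      have hi := hg i
      have hjj := hg j
      rw [abs_sub_le_iff] at hi hjj
      -- v j - v i ≥ 2 D₀ + ε/(2(J+1))
      have hij' : ((i:ℕ):ℝ) + 1 ≤ ((j:ℕ):ℝ) := by exact_mod_cast hlt
      have hgap : v i + 2 * D₀ + a ≤ v j := by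
        simp only [hv]
        nlinarith [hapos]
      linarith [hi.1, hi.2, hjj.1, hjj.2, hε'a]
    rcases lt_trichotomy (i:ℕ) (j:ℕ) with h | h | h
    · exact key i j h hij
    · exact hne (Fin.ext h)
    · exact key j i h hij.symm
  haveI := hfin
  haveI : Finite (G ⧸ Γ') := inferInstance
  have hcard : J + 1 ≤ Nat.card (G ⧸ Γ') := by
    have := Nat.card_le_card_of_injective _ hinj
    simpa using this
  have : Nat.card (G ⧸ Γ') = Γ'.index := rfl
  omega
end

section
/- Let G be a group with finite symmetric generating set S containing the identity, acting on its Cayley graph Cay(G,S). If G' is a normal subgroup of G with index [G : G'] ≤ J, then G' is generated by the set of its elements of word length at most 4J+2 with respect to S. -/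
/-- If `G` has a finite symmetric generating set `S` containing the identity
and `G'` is a normal subgroup of index at most `J`, then `G'` is generated by its elements of
word length at most `4J+2` with respect to `S`. -/
theorem stmt1 {G : Type*} [Group G] (S : Set G) (hfin : S.Finite)
    (hsymm : S⁻¹ = S) (hone : (1 : G) ∈ S) (hgen : Subgroup.closure S = ⊤)
    (G' : Subgroup G) (hnorm : G'.Normal) {J : ℕ}
    (hfinidx : G'.FiniteIndex) (hJ : G'.index ≤ J) :
    Subgroup.closure {g : G | g ∈ G' ∧ ∃ l : List G, l.length ≤ 4 * J + 2 ∧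
      (∀ s ∈ l, s ∈ S) ∧ l.prod = g} = G' := by
  set T : Set G := {g : G | g ∈ G' ∧ ∃ l : List G, l.length ≤ 4 * J + 2 ∧
      (∀ s ∈ l, s ∈ S) ∧ l.prod = g} with hT
  apply le_antisymm
  · rw [Subgroup.closure_le]
    rintro g ⟨hg, -⟩
    exact hg
  intro g hg
  -- get a word for g
  obtain ⟨l, hlS, hlprod⟩ : ∃ l : List G, (∀ y ∈ l, y ∈ S) ∧ l.prod = g := by
    have hmem : g ∈ (Subgroup.closure S).toSubmonoid := by
      rw [hgen]; trivial
    rw [Subgroup.closure_toSubmonoid, hsymm, Set.union_self] at hmem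
    exact Submonoid.exists_list_of_mem_closure hmem
  have hfq : Finite (G ⧸ G') := G'.finite_quotient_of_finiteIndex
  have hfqf : Fintype (G ⧸ G') := Fintype.ofFinite _
  suffices key : ∀ n : ℕ, ∀ l : List G, l.length ≤ n → (∀ y ∈ l, y ∈ S) → l.prod ∈ G' →
      l.prod ∈ Subgroup.closure T by
    exact hlprod ▸ key l.length l le_rfl hlS (by rw [hlprod]; exact hg)
  intro n
  induction n with
  | zero =>
    intro l hlen _ _
    rw [List.length_eq_zero_iff.mp (Nat.le_zero.mp hlen)]
    simpa using one_mem _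
  | succ n ih =>
    intro l hlen hS hmem
    by_cases hshort : l.length ≤ 4 * J + 2
    · exact Subgroup.subset_closure ⟨hmem, l, hshort, hS, rfl⟩
    push_neg at hshort
    have main : ∀ a b : ℕ, a < b → b ≤ J →
        (QuotientGroup.mk ((l.take a).prod) : G ⧸ G') = QuotientGroup.mk ((l.take b).prod) →
        l.prod ∈ Subgroup.closure T := by
      intro a b hab hbJ heq
      have hblen : b ≤ l.length := by omega
      have halen : a ≤ l.length := by omega
      have hmemH : ((l.take a).prod)⁻¹ * (l.take b).prod ∈ G' := QuotientGroup.eq.mp heq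
      have hh : (l.take b).prod * ((l.take a).prod)⁻¹ ∈ G' := by
        have := hnorm.conj_mem _ hmemH ((l.take a).prod)
        simpa [mul_assoc] using this
      -- word for h
      have hhT : (l.take b).prod * ((l.take a).prod)⁻¹ ∈ T := by
        refine ⟨hh, l.take b ++ ((l.take a).map fun x => x⁻¹).reverse, ?_, ?_, ?_⟩
        · simp only [List.length_append, List.length_reverse, List.length_map,
            List.length_take]
          omega
        · intro s hs
          rcases List.mem_append.mp hs with h1 | h1
          · exact hS s (List.take_subset _ _ h1)
          · rw [List.mem_reverse] at h1
            obtain ⟨y, hy, rfl⟩ := List.mem_map.mp h1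
            have : y ∈ S := hS y (List.take_subset _ _ hy)
            rw [← hsymm]
            simpa using this
        · rw [List.prod_append, ← List.prod_inv_reverse]
      -- decomposition
      have hL2 : (l.take b).prod * ((l.take a).prod)⁻¹ * ((l.take a ++ l.drop b).prod)
          = l.prod := by
        conv_rhs => rw [← List.take_append_drop b l]
        rw [List.prod_append, List.prod_append]
        simp [mul_assoc]
      have hL2len : (l.take a ++ l.drop b).length ≤ n := by
        simp only [List.length_append, List.length_take, List.length_drop]
        omega
      have hL2S : ∀ y ∈ l.take a ++ l.drop b, y ∈ S := by
        intro y hy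
        rcases List.mem_append.mp hy with h1 | h1
        · exact hS y (List.take_subset _ _ h1)
        · exact hS y (List.drop_subset _ _ h1)
      have hL2mem : (l.take a ++ l.drop b).prod ∈ G' := by
        have := G'.mul_mem (G'.inv_mem hh) hmem
        rwa [← hL2, inv_mul_cancel_left] at this
      rw [← hL2]
      exact Subgroup.mul_mem _ (Subgroup.subset_closure hhT) (ih _ hL2len hL2S hL2mem)
    obtain ⟨i, j, hij, hfij⟩ := Fintype.exists_ne_map_eq_of_card_lt
      (fun i : Fin (J + 1) => (QuotientGroup.mk ((l.take i).prod) : G ⧸ G'))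
      (by
        rw [Fintype.card_fin, ← Nat.card_eq_fintype_card]
        exact lt_of_le_of_lt hJ (Nat.lt_succ_self J))
    rcases (Fin.lt_or_lt_of_ne hij) with h | h
    · exact main i j h (Nat.lt_succ_iff.mp j.isLt) hfij
    · exact main j i h (Nat.lt_succ_iff.mp i.isLt) hfij.symm
end

section
/- Let G be a crystallographic group of ℝ^k, let J be a bound on the index of the translation lattice 𝓛(G) = G ∩ Transl(ℝ^k) in G, and set r_k := √(2 sin(π/J)). If 0 < r < r_k and g ∈ G moves every point of the open ball B(O, 1/r) by less than r, then g is a translation. -/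
/-- An isometry of Euclidean space is a translation if it is of the form `x ↦ x + v`. -/
def IsTranslation {k : ℕ}
    (f : EuclideanSpace ℝ (Fin k) ≃ᵢ EuclideanSpace ℝ (Fin k)) : Prop :=
  ∃ v : EuclideanSpace ℝ (Fin k), ∀ x : EuclideanSpace ℝ (Fin k), f x = x + v

open Real RealInnerProductSpace

lemma specAux {E : Type*} [NormedAddCommGroup E] [InnerProductSpace ℝ E] (A : E ≃ₗᵢ[ℝ] E)
    {v : E} {c θ : ℝ} (hv0 : v ≠ 0)
    (hAv : A v ≠ v) (hAA : A (A v) = c • A v - v) (hcos : Real.cos θ = c / 2)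
    (hsθ : 0 < Real.sin θ) (hAvv : ⟪A v, v⟫ = (c / 2) * ‖v‖^2) (hm2 : -2 < c)
    {n : ℕ} (hAn : (A ^ n) v = v) :
    Real.cos ((n : ℝ) * θ) = 1 := by
  have hrec : ∀ j : ℕ, (A ^ j) v = (Real.sin ((j : ℝ) * θ) / Real.sin θ) • A v
      - (Real.sin (((j : ℝ) - 1) * θ) / Real.sin θ) • v := by
    intro j
    induction j with
    | zero =>
      rw [pow_zero, LinearIsometryEquiv.coe_one, id_eq]
      push_cast
      rw [zero_mul, Real.sin_zero, zero_div, zero_smul, zero_sub,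
        show ((0 : ℝ) - 1) * θ = -θ by ring, Real.sin_neg, neg_div, neg_smul, neg_neg,
        div_self (ne_of_gt hsθ), one_smul]
    | succ j ih =>
      have h3 : (A ^ (j+1)) v = A ((A ^ j) v) := by rw [pow_succ']; rfl
      rw [h3, ih, map_sub, map_smul, map_smul, hAA]
      have hid : Real.sin (((j : ℝ) + 1) * θ)
          = c * Real.sin ((j : ℝ) * θ) - Real.sin (((j : ℝ) - 1) * θ) := by
        rw [show ((j : ℝ) + 1) * θ = (j : ℝ) * θ + θ by ring,
          show ((j : ℝ) - 1) * θ = (j : ℝ) * θ - θ by ring, Real.sin_add, Real.sin_sub]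
        linear_combination 2 * Real.sin ((j : ℝ) * θ) * hcos
      have hcoef : Real.sin (((j : ℝ) + 1) * θ) / Real.sin θ
          = (Real.sin ((j : ℝ) * θ) / Real.sin θ) * c - Real.sin (((j : ℝ) - 1) * θ) / Real.sin θ := by
        field_simp
        linarith [hid, show Real.sin (θ * ((j:ℝ) - 1)) = Real.sin (((j:ℝ) - 1) * θ) by rw [mul_comm]]
      push_cast
      rw [show ((j : ℝ) + 1 - 1) = (j : ℝ) by ring, smul_sub, smul_smul, hcoef, sub_smul, mul_comm]
      abel
  have hfin := hrec n
  rw [hAn] at hfin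
  set a := Real.sin ((n : ℝ) * θ) / Real.sin θ with hadef
  set b := Real.sin (((n : ℝ) - 1) * θ) / Real.sin θ with hbdef
  have hvn : (0:ℝ) < ‖v‖ := norm_pos_iff.2 hv0
  have ha : a = 0 := by
    by_contra ha
    have hstep : a • A v = (1 + b) • v := by
      have h4 : v + b • v = a • A v := by nth_rw 1 [hfin]; abel
      rw [← h4, add_smul, one_smul]
    have hAveq : A v = (a⁻¹ * (1 + b)) • v := by
      rw [mul_smul, ← hstep, smul_smul, inv_mul_cancel₀ ha, one_smul]
    set t := a⁻¹ * (1 + b) with htdef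
    have h1 : t = c / 2 := by
      rw [hAveq, real_inner_smul_left, real_inner_self_eq_norm_sq] at hAvv
      have := mul_right_cancel₀ (by positivity : ‖v‖^2 ≠ 0) hAvv
      exact this
    have h2 : |t| = 1 := by
      have hn : ‖A v‖ = ‖v‖ := A.norm_map v
      rw [hAveq, norm_smul, Real.norm_eq_abs] at hn
      have := mul_right_cancel₀ (ne_of_gt hvn) (by rw [hn, one_mul] : |t| * ‖v‖ = 1 * ‖v‖)
      exact this
    have h3 : t ≠ 1 := fun h => hAv (by rw [hAveq, h, one_smul])
    rcases (abs_eq (by norm_num : (0:ℝ) ≤ 1)).1 h2 with h | h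
    · exact h3 h
    · rw [h] at h1; linarith
  have hbn : b = -1 := by
    rw [ha, zero_smul, zero_sub] at hfin
    have h5 : (1 + b) • v = 0 := by
      rw [add_smul, one_smul]
      nth_rw 1 [hfin]
      abel
    rcases smul_eq_zero.1 h5 with h | h
    · linarith
    · exact absurd h hv0
  have hsn : Real.sin ((n : ℝ) * θ) = 0 := by
    rcases div_eq_zero_iff.1 ha with h | h
    · exact h
    · exact absurd h (ne_of_gt hsθ)
  have hsnm : Real.sin (((n : ℝ) - 1) * θ) = -Real.sin θ := by
    have := hbn
    rw [hbdef, div_eq_iff (ne_of_gt hsθ)] at this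
    linarith
  have hsub : Real.sin (((n : ℝ) - 1) * θ)
      = Real.sin ((n : ℝ) * θ) * Real.cos θ - Real.cos ((n : ℝ) * θ) * Real.sin θ := by
    rw [show ((n : ℝ) - 1) * θ = (n : ℝ) * θ - θ by ring, Real.sin_sub]
  rw [hsn, hsnm] at hsub
  have h6 : (Real.cos ((n : ℝ) * θ) - 1) * Real.sin θ = 0 := by linarith
  rcases mul_eq_zero.1 h6 with h | h
  · linarith
  · exact absurd h (ne_of_gt hsθ)

set_option maxHeartbeats 1000000 in
lemma mainAux {E : Type*} [NormedAddCommGroup E] [InnerProductSpace ℝ E] [FiniteDimensional ℝ E]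
    (A : E ≃ₗᵢ[ℝ] E) {n J : ℕ} (hn0 : 0 < n) (hnJ : n ≤ J)
    (hAn : ∀ x, (A ^ n) x = x)
    {r : ℝ} (hr0 : 0 < r) (hrk : r < Real.sqrt (2 * Real.sin (π / J)))
    (b : E) (hmove : ∀ p : E, ‖p‖ < 1 / r → ‖A p + b - p‖ < r) :
    ∀ x, A x = x := by
  by_contra hfix
  have hn1 : n ≠ 1 := by
    intro h
    exact hfix fun x => by have := hAn x; rwa [h, pow_one] at this
  have hn2 : 2 ≤ n := by omega
  have hJ2 : 2 ≤ J := hn2.trans hnJ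
  -- symmetric operator S = A + A⁻¹
  set S : E →ₗ[ℝ] E := (A.toLinearEquiv : E →ₗ[ℝ] E) + (A.symm.toLinearEquiv : E →ₗ[ℝ] E)
    with hSdef
  have hSapp : ∀ x, S x = A x + A.symm x := fun x => rfl
  have hadj : ∀ x y : E, ⟪A x, y⟫ = ⟪x, A.symm y⟫ := by
    intro x y
    have h : y = A (A.symm y) := by simp
    rw [h, A.inner_map_map, A.apply_symm_apply]
  have hsymm : S.IsSymmetric := by
    intro x y
    have h2 : ⟪A.symm x, y⟫ = ⟪x, A y⟫ := by
      rw [real_inner_comm, ← hadj y x, real_inner_comm]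
    simp only [hSapp, inner_add_left, inner_add_right]
    rw [hadj x y, h2]
    ring
  have hfr : Module.finrank ℝ E = Module.finrank ℝ E := rfl
  set e := hsymm.eigenvectorBasis hfr with hedef
  set μ := hsymm.eigenvalues hfr with hmudef
  have heig : ∀ i, S (e i) = μ i • e i := fun i => hsymm.apply_eigenvectorBasis hfr i
  have hex : ∃ i, A (e i) ≠ e i := by
    by_contra hc
    push_neg at hc
    refine hfix fun x => ?_
    have hAB : (A.toLinearEquiv : E →ₗ[ℝ] E) = LinearMap.id :=
      e.toBasis.ext fun i => by simpa using hc i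
    have := LinearMap.congr_fun hAB x
    simpa using this
  obtain ⟨i, hAv⟩ := hex
  set v := e i with hvdef
  have hv1 : ‖v‖ = 1 := e.orthonormal.1 i
  have hv0 : v ≠ 0 := by
    intro h
    rw [h, norm_zero] at hv1
    norm_num at hv1
  set c := μ i with hcdef
  have hSv : A v + A.symm v = c • v := by rw [← hSapp]; exact heig i
  have hAvv : ⟪A v, v⟫ = c / 2 := by
    have h1 : ⟪A v + A.symm v, v⟫ = c := by
      rw [hSv, real_inner_smul_left, real_inner_self_eq_norm_sq, hv1]; ring
    have h2 : ⟪A.symm v, v⟫ = ⟪A v, v⟫ := by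
      rw [real_inner_comm, ← hadj, real_inner_comm]
    rw [inner_add_left, h2] at h1
    linarith
  have hnorm : ‖A v - v‖ ^ 2 = 2 - c := by
    rw [norm_sub_sq_real, A.norm_map, hv1, hAvv]
    ring
  have hc2 : c < 2 := by
    have hpos : 0 < ‖A v - v‖ := norm_pos_iff.2 (sub_ne_zero.2 hAv)
    nlinarith
  have hcm2 : -2 ≤ c := by
    have h := abs_real_inner_le_norm (A v) v
    rw [A.norm_map, hv1, hAvv] at h
    have h' := abs_le.1 h
    have := h'.1
    norm_num at this
    linarith
  have hAA : A (A v) = c • A v - v := by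
    have h := congrArg A hSv
    rw [map_add, A.apply_symm_apply, map_smul] at h
    exact eq_sub_of_add_eq h
  -- Key bound: 4 sin²(π/n) ≤ 2 - c = ‖A v - v‖²
  have hsin : 4 * Real.sin (π / n) ^ 2 ≤ 2 - c := by
    rcases eq_or_lt_of_le hcm2 with hm2 | hm2
    · have h1 : Real.sin (π / n) ^ 2 ≤ 1 := Real.sin_sq_le_one _
      nlinarith
    set θ := Real.arccos (c / 2) with hθdef
    have hcos : Real.cos θ = c / 2 := Real.cos_arccos (by linarith) (by linarith)
    have hθpos : 0 < θ := Real.arccos_pos.2 (by linarith)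
    have hθpi : θ ≤ π := Real.arccos_le_pi _
    have hθltpi : θ < π := by
      rcases lt_or_eq_of_le hθpi with h | h
      · exact h
      · exfalso
        rw [h, Real.cos_pi] at hcos
        linarith
    have hsθ : 0 < Real.sin θ := Real.sin_pos_of_pos_of_lt_pi hθpos hθltpi
    have hcn := specAux A hv0 hAv hAA hcos hsθ (by rw [hAvv, hv1]; ring) hm2 (hAn v)
    obtain ⟨m, hm⟩ := (Real.cos_eq_one_iff _).1 hcn
    have hnpos : (0 : ℝ) < n := by
      exact_mod_cast Nat.pos_of_ne_zero (by omega)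
    have hm1 : (1 : ℝ) ≤ m := by
      have hprod : (0 : ℝ) < (m : ℝ) * (2 * π) := by
        rw [hm]; positivity
      have h0 : (0 : ℝ) < m := by
        by_contra h
        push_neg at h
        nlinarith [Real.pi_pos]
      have h1 : 0 < m := by exact_mod_cast h0
      exact_mod_cast h1
    have hθn : 2 * π / n ≤ θ := by
      rw [div_le_iff₀ hnpos]
      calc 2 * π ≤ (m : ℝ) * (2 * π) := le_mul_of_one_le_left (by positivity) hm1
        _ = (n : ℝ) * θ := hm
        _ = θ * n := by ring
    have hcoscos : Real.cos θ ≤ Real.cos (2 * π / n) :=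
      Real.cos_le_cos_of_nonneg_of_le_pi (by positivity) hθpi hθn
    have hform : Real.cos (2 * π / (n : ℝ)) = 1 - 2 * Real.sin (π / n) ^ 2 := by
      have h1 := Real.cos_two_mul (π / n)
      have h2 := Real.sin_sq_add_cos_sq (π / n)
      rw [show 2 * π / (n : ℝ) = 2 * (π / n) by ring, h1]
      linarith
    rw [hform, hcos] at hcoscos
    linarith
  -- final contradiction with hmove
  set s := Real.sin (π / J) with hsdef
  have hsJ : 0 < s := by
    apply Real.sin_pos_of_pos_of_lt_pi
    · have h : (0:ℝ) < J := by exact_mod_cast (by omega : 0 < J)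
      positivity
    · apply div_lt_self Real.pi_pos
      exact_mod_cast (by omega : 1 < J)
  have hmono : s ≤ Real.sin (π / n) := by
    apply Real.sin_le_sin_of_le_of_le_pi_div_two
    · have h : (0:ℝ) < J := by exact_mod_cast (by omega : 0 < J)
      have h2 : (0:ℝ) ≤ π / J := by positivity
      linarith [Real.pi_pos]
    · rw [div_le_div_iff₀ (by exact_mod_cast (by omega : (0:ℕ) < n) : (0:ℝ) < (n:ℝ))
        (by norm_num : (0:ℝ) < 2)]
      have h : (2:ℝ) ≤ n := by exact_mod_cast hn2
      nlinarith [Real.pi_pos]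
    · apply div_le_div_of_nonneg_left Real.pi_pos.le
      · exact_mod_cast Nat.pos_of_ne_zero (by omega)
      · exact_mod_cast hnJ
  have hlow : 2 * s ≤ ‖A v - v‖ := by
    have h1 : (2 * s) ^ 2 ≤ ‖A v - v‖ ^ 2 := by
      rw [hnorm]
      nlinarith [hsin, hmono, hsJ]
    nlinarith [norm_nonneg (A v - v), hsJ]
  have hr2 : r ^ 2 < 2 * s := by
    have := (Real.lt_sqrt hr0.le).1 hrk
    rwa [sq] at this ⊢
  set t := r / (2 * s) with htdef
  have ht0 : 0 < t := by positivity
  have htr : t < 1 / r := by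
    rw [htdef, div_lt_div_iff₀ (by positivity) hr0]
    nlinarith
  have hnv : ‖t • v‖ < 1 / r := by
    rw [norm_smul, hv1, mul_one, Real.norm_eq_abs, abs_of_pos ht0]
    exact htr
  have hp1 := hmove (t • v) hnv
  have hp2 := hmove (-(t • v)) (by rwa [norm_neg])
  have e1 : ‖t • (A v - v) + b‖ < r := by
    have heq : A (t • v) + b - t • v = t • (A v - v) + b := by
      rw [map_smul, smul_sub]; abel
    rwa [heq] at hp1
  have e2 : ‖t • (A v - v) - b‖ < r := by
    have heq : A (-(t • v)) + b - -(t • v) = -(t • (A v - v) - b) := by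
      rw [map_neg, map_smul, smul_sub]; abel
    rw [heq, norm_neg] at hp2
    exact hp2
  have hsum : ‖(2 * t) • (A v - v)‖ ≤ ‖t • (A v - v) + b‖ + ‖t • (A v - v) - b‖ := by
    have heq : (2 * t) • (A v - v) = (t • (A v - v) + b) + (t • (A v - v) - b) := by
      rw [mul_smul, two_smul]; abel
    rw [heq]
    exact norm_add_le _ _
  rw [norm_smul, Real.norm_eq_abs, abs_of_pos (by positivity : (0:ℝ) < 2 * t)] at hsum
  have hteq : t * (2 * s) = r := by
    rw [htdef]
    field_simp
  nlinarith [hlow, hsum, e1, e2, ht0]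

/-- Let `G` be a crystallographic group of `ℝ^k` (a discrete cocompact group
of isometries), `T` the full group of translations, and `J` a bound for the index of the
translation lattice `G ∩ T` in `G`.  Set `r_k := √(2 sin(π/J))`.  If `0 < r < r_k` and
`g ∈ G` moves every point of the ball `B(0, 1/r)` by less than `r`, then `g` is a
translation. -/
theorem stmt3 {k : ℕ}
    (G : Subgroup (EuclideanSpace ℝ (Fin k) ≃ᵢ EuclideanSpace ℝ (Fin k)))
    (hdisc : ∀ (x : EuclideanSpace ℝ (Fin k)) (r : ℝ),
      {g : G | dist ((g : EuclideanSpace ℝ (Fin k) ≃ᵢ EuclideanSpace ℝ (Fin k)) x) x ≤ r}.Finite)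
    (hcoc : ∃ D : ℝ, ∀ x y : EuclideanSpace ℝ (Fin k), ∃ g ∈ G, dist y (g x) ≤ D)
    (T : Subgroup (EuclideanSpace ℝ (Fin k) ≃ᵢ EuclideanSpace ℝ (Fin k)))
    (hT : ∀ f, f ∈ T ↔ IsTranslation f)
    {J : ℕ} (hidx : T.relIndex G ≤ J) (hne : T.relIndex G ≠ 0)
    {r : ℝ} (hr0 : 0 < r) (hrk : r < Real.sqrt (2 * Real.sin (Real.pi / J)))
    {g : EuclideanSpace ℝ (Fin k) ≃ᵢ EuclideanSpace ℝ (Fin k)} (hg : g ∈ G)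
    (hmove : ∀ p : EuclideanSpace ℝ (Fin k), ‖p‖ < 1 / r → dist (g p) p < r) :
    IsTranslation g := by
  classical
  clear hdisc hcoc
  obtain ⟨n, hn0, hnle, hgn⟩ := Subgroup.exists_pow_mem_of_relIndex_ne_zero hne hg
  have hnJ : n ≤ J := hnle.trans hidx
  obtain ⟨w, hw⟩ := (hT _).1 hgn.1
  set A := g.toRealAffineIsometryEquiv.linearIsometryEquiv with hAdef
  have key : ∀ x, g x = A x + g 0 := by
    intro x
    have := g.toRealAffineIsometryEquiv.map_vadd (0 : EuclideanSpace ℝ (Fin k)) x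
    simpa [add_comm] using this
  have powkey : ∀ (m : ℕ) (x : EuclideanSpace ℝ (Fin k)),
      (g ^ m) x = (A ^ m) x + (g ^ m) 0 := by
    intro m
    induction m with
    | zero => intro x; simp
    | succ m ih =>
      intro x
      have h1 : (g ^ (m+1)) x = g ((g ^ m) x) := by rw [pow_succ']; rfl
      have h2 : (g ^ (m+1)) (0 : EuclideanSpace ℝ (Fin k)) = g ((g ^ m) 0) := by
        rw [pow_succ']; rfl
      have h3 : (A ^ (m+1)) x = A ((A ^ m) x) := by rw [pow_succ']; rfl
      rw [h1, h2, ih, key ((A ^ m) x + (g ^ m) 0), key ((g ^ m) 0), h3, map_add]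
      abel
  have hAn : ∀ x, (A ^ n) x = x := by
    intro x
    have h0 := hw 0
    have hx := hw x
    rw [powkey] at h0 hx
    simp only [map_zero, zero_add] at h0
    rw [h0] at hx
    exact add_right_cancel hx
  have hmove' : ∀ p : EuclideanSpace ℝ (Fin k), ‖p‖ < 1 / r → ‖A p + g 0 - p‖ < r := by
    intro p hp
    have := hmove p hp
    rwa [dist_eq_norm, key p] at this
  have hfix := mainAux A hn0 hnJ hAn hr0 hrk (g 0) hmove'
  exact ⟨g 0, fun x => by rw [key x, hfix x]⟩
end

section
/- Let X be a proper CAT(0) space and let G₀ < G be discrete, semisimple, virtually abelian groups of isometries of X. Then [G : G₀] is finite if and only if G and G₀ have the same abelian rank. -/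
/-- A metric space is CAT(0) if midpoints exist and the CN-inequality of Bruhat–Tits holds. -/
def IsCAT0 (X : Type*) [MetricSpace X] : Prop :=
  (∀ x y : X, ∃ m : X, dist x m = dist x y / 2 ∧ dist m y = dist x y / 2) ∧
  ∀ x y z m : X, dist y m = dist y z / 2 → dist m z = dist y z / 2 →
    dist x m ^ 2 ≤ (dist x y ^ 2 + dist x z ^ 2) / 2 - dist y z ^ 2 / 4

/-- A virtually abelian group has rank `k` if it contains a finite-index subgroup which is
free abelian of rank `k` (isomorphic to `ℤ^k`). -/
def HasRank (G : Type*) [Group G] (k : ℕ) : Prop :=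
  ∃ A : Subgroup G, A.FiniteIndex ∧ Nonempty (↥A ≃* Multiplicative (Fin k → ℤ))

open Multiplicative

/-- Abbreviation for the free abelian group of rank `k`, written multiplicatively. -/
abbrev Zk (k : ℕ) : Type := Multiplicative (Fin k → ℤ)

/-- The `ℤ`-submodule of `Fin k → ℤ` corresponding to a subgroup of `Zk k`. -/
def subMod {k : ℕ} (S : Subgroup (Zk k)) : Submodule ℤ (Fin k → ℤ) :=
  AddSubgroup.toIntSubmodule (Subgroup.toAddSubgroup' S)

lemma mem_subMod {k : ℕ} {S : Subgroup (Zk k)} {x : Fin k → ℤ} :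
    x ∈ subMod S ↔ ofAdd x ∈ S := Iff.rfl

/-- A subgroup of `Zk k` is multiplicatively isomorphic to the corresponding submodule. -/
def subModEquiv {k : ℕ} (S : Subgroup (Zk k)) : ↥S ≃* Multiplicative ↥(subMod S) where
  toFun x := ofAdd ⟨toAdd (x : Zk k), mem_subMod.2 x.2⟩
  invFun y := ⟨ofAdd ((toAdd y : ↥(subMod S)) : Fin k → ℤ), mem_subMod.1 (toAdd y).2⟩
  left_inv _ := rfl
  right_inv _ := rfl
  map_mul' _ _ := rfl

/-- A subgroup of `ℤ^k` all of whose `n`-th powers lie inside (with `n ≠ 0`)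
is itself isomorphic to `ℤ^k`. -/
lemma z1 {k : ℕ} (S : Subgroup (Zk k)) (n : ℕ) (hn : n ≠ 0)
    (hmem : ∀ x : Zk k, x ^ n ∈ S) : Nonempty (↥S ≃* Zk k) := by
  classical
  set P := subMod S with hP
  have hPmem : ∀ x : Fin k → ℤ, (n : ℤ) • x ∈ P := by
    intro x
    rw [mem_subMod, ofAdd_zsmul, zpow_natCast]
    exact hmem _
  obtain ⟨m, b⟩ := Submodule.basisOfPid (Pi.basisFun ℤ (Fin k)) P
  have hmk : m ≤ k := by
    simpa using (Pi.basisFun ℤ (Fin k)).card_le_card_of_linearIndependent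
      (b.linearIndependent.map' P.subtype P.ker_subtype)
  have hnz : (n : ℤ) ≠ 0 := by exact_mod_cast hn
  have hkm : k ≤ m := by
    set v : Fin k → ↥P := fun i => ⟨(n : ℤ) • Pi.single i 1, hPmem _⟩ with hv
    have hinj : Function.Injective (fun x : Fin k → ℤ => (n : ℤ) • x) :=
      smul_right_injective _ hnz
    have h1 : LinearIndependent ℤ
        (fun i => ((n : ℤ) • (LinearMap.id : (Fin k → ℤ) →ₗ[ℤ] (Fin k → ℤ)))
          (Pi.basisFun ℤ (Fin k) i)) :=
      (Pi.basisFun ℤ (Fin k)).linearIndependent.map' _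
        (LinearMap.ker_eq_bot.2 (by exact hinj))
    have hli : LinearIndependent ℤ v := by
      apply LinearIndependent.of_comp P.subtype
      convert h1 using 1
      funext i
      simp [hv]
    simpa using b.card_le_card_of_linearIndependent hli
  have hmk' : m = k := le_antisymm hmk hkm
  subst hmk'
  exact ⟨(subModEquiv S).trans (AddEquiv.toMultiplicative b.equivFun.toAddEquiv)⟩

/-- A subgroup of `ℤ^k` which is isomorphic to `ℤ^k` has finite index. -/
lemma z3 {k : ℕ} (S : Subgroup (Zk k)) (e : Zk k ≃* ↥S) : S.FiniteIndex := by
  classical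
  haveI : AddGroup.FG (Fin k → ℤ) := Module.Finite.iff_addGroup_fg.mp inferInstance
  have hfin : Finite (Zk k ⧸ S) := by
    apply CommGroup.finite_of_fg_torsion
    intro x
    obtain ⟨g, rfl⟩ := QuotientGroup.mk'_surjective S x
    set P := subMod S with hP
    -- a linearly independent family inside P
    set ψ : (Fin k → ℤ) →+ (Fin k → ℤ) :=
      { toFun := fun x => toAdd ((e (ofAdd x) : ↥S) : Zk k)
        map_zero' := by simp
        map_add' := by intro a b; simp [ofAdd_add] } with hψ
    have ψinj : Function.Injective ψ := by
      intro a b hab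
      have : (e (ofAdd a) : ↥S) = e (ofAdd b) :=
        Subtype.ext (Multiplicative.toAdd.injective hab)
      exact Multiplicative.ofAdd.injective (e.injective this)
    set v : Fin k → (Fin k → ℤ) := fun i => ψ (Pi.single i 1) with hv
    have hvP : ∀ i, v i ∈ P := fun i => mem_subMod.2 (e (ofAdd (Pi.single i 1))).2
    have hli : LinearIndependent ℤ v := by
      have := (Pi.basisFun ℤ (Fin k)).linearIndependent.map' ψ.toIntLinearMap
        (by rw [LinearMap.ker_eq_bot]; exact ψinj)
      convert this using 1
      funext i
      simp [hv]
      all_goals rfl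
    -- the family extended by `toAdd g` is not linearly independent
    have hnotli : ¬ LinearIndependent ℤ (Fin.cons (toAdd g) v : Fin (k+1) → (Fin k → ℤ)) := by
      intro h
      have := (Pi.basisFun ℤ (Fin k)).card_le_card_of_linearIndependent h
      simp at this
    obtain ⟨c, hc0, j, hj⟩ := Fintype.not_linearIndependent_iff.mp hnotli
    have hsum : c 0 • toAdd g + ∑ i : Fin k, c i.succ • v i = 0 := by
      rw [← hc0, Fin.sum_univ_succ]
      simp
    have hc00 : c 0 ≠ 0 := by
      intro h0
      have htail : ∀ i : Fin k, c i.succ = 0 := by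
        apply Fintype.linearIndependent_iff.mp hli
        rw [h0] at hsum
        simpa using hsum
      rcases Fin.cases (motive := fun j => c j ≠ 0 → False)
        (fun h => h h0) (fun i h => h (htail i)) j hj
    have hmemP : c 0 • toAdd g ∈ P := by
      have : c 0 • toAdd g = - ∑ i : Fin k, c i.succ • v i :=
        eq_neg_of_add_eq_zero_left hsum
      rw [this]
      exact neg_mem (Submodule.sum_mem _ fun i _ => Submodule.smul_mem _ _ (hvP i))
    have hgS : g ^ (c 0) ∈ S := by
      have := mem_subMod.1 hmemP
      rwa [ofAdd_zsmul, ofAdd_toAdd] at this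
    have hgn : g ^ ((c 0).natAbs) ∈ S := by
      rcases Int.natAbs_eq (c 0) with h | h
      · rw [← zpow_natCast, ← h]; exact hgS
      · rw [← zpow_natCast]
        have hcast : ((c 0).natAbs : ℤ) = -(c 0) := by omega
        rw [hcast, zpow_neg]
        exact inv_mem hgS
    refine isOfFinOrder_iff_pow_eq_one.2 ⟨(c 0).natAbs, Int.natAbs_pos.2 hc00, ?_⟩
    rw [← map_pow, QuotientGroup.mk'_apply, QuotientGroup.eq_one_iff]
    exact hgn
  haveI := hfin
  exact Subgroup.finiteIndex_of_finite_quotient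

/-- Transfer: a finite-index subgroup of a group isomorphic to `ℤ^k` is isomorphic to `ℤ^k`. -/
lemma transfer_iso {G : Type*} [Group G] {k : ℕ} (A : Subgroup G)
    (φ : ↥A ≃* Zk k) (T : Subgroup ↥A) [hT : T.FiniteIndex] :
    Nonempty (↥T ≃* Zk k) := by
  set S := T.map φ.toMonoidHom with hS
  have hidx : S.index = T.index :=
    Subgroup.index_map_eq T φ.surjective
      (by
        have hker : φ.toMonoidHom.ker = ⊥ := (MonoidHom.ker_eq_bot_iff _).mpr φ.injective
        rw [hker]; exact bot_le)
  have hSne : S.index ≠ 0 := by rw [hidx]; exact hT.index_ne_zero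
  haveI : S.FiniteIndex := ⟨hSne⟩
  obtain ⟨e⟩ := z1 S S.index hSne (fun x => S.pow_index_mem x)
  exact ⟨(T.equivMapOfInjective φ.toMonoidHom φ.injective).trans e⟩

/-- Transfer: a subgroup isomorphic to `ℤ^k` of a group isomorphic to `ℤ^k`
has finite index. -/
lemma transfer_fi {G : Type*} [Group G] {k : ℕ} (A : Subgroup G)
    (φ : ↥A ≃* Zk k) (T : Subgroup ↥A) (e : ↥T ≃* Zk k) : T.FiniteIndex := by
  set S := T.map φ.toMonoidHom with hS
  have hfi : S.FiniteIndex :=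
    z3 S (e.symm.trans (T.equivMapOfInjective φ.toMonoidHom φ.injective))
  have hidx : S.index = T.index :=
    Subgroup.index_map_eq T φ.surjective
      (by
        have hker : φ.toMonoidHom.ker = ⊥ := (MonoidHom.ker_eq_bot_iff _).mpr φ.injective
        rw [hker]; exact bot_le)
  exact ⟨hidx ▸ hfi.index_ne_zero⟩

/-- `ℤ^a ≅ ℤ^b` implies `a = b`. -/
lemma rank_eq {a b : ℕ} (h : Zk a ≃* Zk b) : a = b := by
  have e : (Fin a → ℤ) ≃+ (Fin b → ℤ) := AddEquiv.toMultiplicative.symm h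
  have := e.toIntLinearEquiv.finrank_eq
  simpa [Module.finrank_pi] using this

/-- Let `X` be a proper CAT(0) space and `G₀ < G` discrete, semisimple,
virtually abelian groups of isometries of `X`, of ranks `k` and `k₀` respectively.  Then
`[G : G₀]` is finite if and only if `k = k₀`. -/
theorem stmt5 {X : Type*} [MetricSpace X] [ProperSpace X] (hcat : IsCAT0 X)
    {G : Type*} [Group G] [MulAction G X]
    (hiso : ∀ g : G, Isometry (fun x : X => g • x))
    (hfaith : ∀ g : G, (∀ x : X, g • x = x) → g = 1)
    (hdisc : ∀ (x : X) (r : ℝ), {g : G | dist (g • x) x ≤ r}.Finite)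
    (hss : ∀ g : G, ∃ x : X, ∀ y : X, dist (g • x) x ≤ dist (g • y) y)
    (G₀ : Subgroup G) {k k₀ : ℕ}
    (hG : HasRank G k) (hG₀ : HasRank ↥G₀ k₀) :
    G₀.FiniteIndex ↔ k = k₀ := by
  obtain ⟨A, hA, ⟨φ⟩⟩ := hG
  obtain ⟨B, hB, ⟨ψ⟩⟩ := hG₀
  set B' := B.map G₀.subtype with hB'
  have ψ' : ↥B' ≃* Zk k₀ :=
    (B.equivMapOfInjective G₀.subtype G₀.subtype_injective).symm.trans ψ
  have hB'le : B' ≤ G₀ := Subgroup.map_subtype_le B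
  haveI := hA
  constructor
  · intro hfin
    haveI : B'.FiniteIndex := by
      constructor
      rw [hB', Subgroup.index_map_subtype]
      exact mul_ne_zero hB.index_ne_zero hfin.index_ne_zero
    haveI : (A ⊓ B').FiniteIndex := inferInstance
    obtain ⟨e1⟩ := transfer_iso A φ ((A ⊓ B').subgroupOf A)
    obtain ⟨e2⟩ := transfer_iso B' ψ' ((A ⊓ B').subgroupOf B')
    have eA : ↥(A ⊓ B') ≃* Zk k :=
      (Subgroup.subgroupOfEquivOfLe inf_le_left).symm.trans e1
    have eB : ↥(A ⊓ B') ≃* Zk k₀ :=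
      (Subgroup.subgroupOfEquivOfLe inf_le_right).symm.trans e2
    exact rank_eq (eA.symm.trans eB)
  · intro hk
    subst hk
    obtain ⟨e1⟩ := transfer_iso B' ψ' (A.subgroupOf B')
    have eq1 : (A.subgroupOf B').map B'.subtype = A ⊓ B' :=
      Subgroup.subgroupOf_map_subtype A B'
    have e2 : ↥(A ⊓ B') ≃* ↥(A.subgroupOf B') :=
      (MulEquiv.subgroupCongr eq1).symm.trans
        ((A.subgroupOf B').equivMapOfInjective B'.subtype B'.subtype_injective).symm
    have eD : ↥(A ⊓ B') ≃* Zk k := e2.trans e1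
    have eE : ↥((A ⊓ B').subgroupOf A) ≃* Zk k :=
      (Subgroup.subgroupOfEquivOfLe inf_le_left).trans eD
    have hE : ((A ⊓ B').subgroupOf A).FiniteIndex := transfer_fi A φ _ eE
    haveI hABfi : (A ⊓ B').FiniteIndex := by
      constructor
      rw [← Subgroup.relIndex_mul_index (inf_le_left : A ⊓ B' ≤ A)]
      exact mul_ne_zero hE.index_ne_zero hA.index_ne_zero
    exact Subgroup.finiteIndex_of_le (H := A ⊓ B') (le_trans inf_le_right hB'le)
end
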